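/- Let K be a field and X, Y ∈ Mat_n(K) with Cent(X) = Cent(Y). Then the set of nonzero subspaces of K^n of the form ker(f(X)^n), as f ranges over the monic irreducible polynomials of K[x], equals the set of nonzero subspaces of the form ker(g(Y)^n), as g ranges over the monic irreducible polynomials of K[x]. (These are exactly the summands of the primary decompositions of K^n as a K[x]-module via X and via Y, respectively.) -/

import Mathlib

open Polynomial Matrix

namespace PrimaryCompAux

variable {K : Type*} [Field K] {n : ℕ}

/-- If `A` commutes with `B`, it commutes with any polynomial in `B`. -/
lemma comm_aeval {A B : Matrix (Fin n) (Fin n) K} (h : A * B = B * A) (p : K[X]) :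
    A * aeval B p = aeval B p * A := by
  induction p using Polynomial.induction_on' with
  | add p q hp hq => rw [map_add, mul_add, add_mul, hp, hq]
  | monomial k c =>
    have hpow : A * B ^ k = B ^ k * A := Commute.pow_right h k
    rw [aeval_monomial]
    calc A * (algebraMap K _ c * B ^ k)
        = algebraMap K _ c * (A * B ^ k) := by
          rw [← mul_assoc, ← Algebra.commutes, mul_assoc]
      _ = algebraMap K _ c * B ^ k * A := by rw [hpow, mul_assoc]

lemma aeval_transpose (X : Matrix (Fin n) (Fin n) K) (p : K[X]) :
    (aeval X p)ᵀ = aeval Xᵀ p := by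
  induction p using Polynomial.induction_on' with
  | add p q hp hq => rw [map_add, map_add, Matrix.transpose_add, hp, hq]
  | monomial k c =>
    rw [aeval_monomial, aeval_monomial, ← Algebra.smul_def, ← Algebra.smul_def,
      Matrix.transpose_smul, Matrix.transpose_pow]

lemma mul_vecMulVec (A : Matrix (Fin n) (Fin n) K) (b c : Fin n → K) :
    A * vecMulVec b c = vecMulVec (A *ᵥ b) c := by
  ext i j
  simp [Matrix.mul_apply, Matrix.vecMulVec_apply, Matrix.mulVec, dotProduct,
    Finset.sum_mul, mul_assoc]

lemma vecMulVec_mul (A : Matrix (Fin n) (Fin n) K) (b c : Fin n → K) :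
    vecMulVec b c * A = vecMulVec b (Aᵀ *ᵥ c) := by
  ext i j
  simp only [Matrix.mul_apply, Matrix.vecMulVec_apply, Matrix.mulVec, dotProduct,
    Matrix.transpose_apply, Finset.mul_sum]
  apply Finset.sum_congr rfl
  intros; ring

lemma vecMulVec_mulVec (b c u : Fin n → K) :
    vecMulVec b c *ᵥ u = (c ⬝ᵥ u) • b := by
  ext i
  simp only [Matrix.mulVec, Matrix.vecMulVec_apply, dotProduct, Pi.smul_apply,
    smul_eq_mul, Finset.sum_mul]
  apply Finset.sum_congr rfl
  intros; ring

lemma sum_mulVec {ι : Type*} (s : Finset ι) (A : ι → Matrix (Fin n) (Fin n) K)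
    (u : Fin n → K) : (∑ i ∈ s, A i) *ᵥ u = ∑ i ∈ s, A i *ᵥ u := by
  induction s using Finset.cons_induction with
  | empty => simp [Matrix.zero_mulVec]
  | cons a s ha ih => rw [Finset.sum_cons, Finset.sum_cons, Matrix.add_mulVec, ih]

/-- Extraction of a "socle" vector from a nonzero `f`-primary idempotent. -/
lemma exists_socle (X E : Matrix (Fin n) (Fin n) K) (f : K[X])
    (hEX : E * X = X * E) (hE2 : E * E = E) (hEne : E ≠ 0)
    (hkill : aeval X f ^ n * E = 0) :
    ∃ b : Fin n → K, b ≠ 0 ∧ E *ᵥ b = b ∧ aeval X f *ᵥ b = 0 := by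
  classical
  have hv : ∃ v, E *ᵥ v ≠ 0 := by
    by_contra hall
    push_neg at hall
    apply hEne
    ext i j
    have := congrFun (hall (Pi.single j 1)) i
    simpa [Matrix.mulVec_single] using this
  obtain ⟨v, hv⟩ := hv
  set w := E *ᵥ v with hw
  have hEw : E *ᵥ w = w := by rw [hw, Matrix.mulVec_mulVec, hE2]
  have hP : ∃ i, (aeval X f) ^ i *ᵥ w = 0 :=
    ⟨n, by rw [hw, Matrix.mulVec_mulVec, hkill, Matrix.zero_mulVec]⟩
  let i1 := Nat.find hP
  have hi1 : (aeval X f) ^ i1 *ᵥ w = 0 := Nat.find_spec hP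
  have hi1pos : 0 < i1 := by
    rcases Nat.eq_zero_or_pos i1 with h0 | h
    · exfalso
      have := hi1
      rw [h0, pow_zero, Matrix.one_mulVec] at this
      exact hv this
    · exact h
  refine ⟨(aeval X f) ^ (i1 - 1) *ᵥ w, ?_, ?_, ?_⟩
  · exact Nat.find_min hP (by omega)
  · have hcomm : E * (aeval X f) ^ (i1 - 1) = (aeval X f) ^ (i1 - 1) * E := by
      have h1 : E * aeval X f = aeval X f * E := comm_aeval hEX f
      exact Commute.pow_right h1 (i1 - 1)
    rw [Matrix.mulVec_mulVec, hcomm, ← Matrix.mulVec_mulVec, hEw]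
  · rw [Matrix.mulVec_mulVec, ← pow_succ']
    have : i1 - 1 + 1 = i1 := by omega
    rw [this, hi1]

lemma aux_ring {R : Type*} [CommRing R] (g1 g2 g3 r a b χ : R)
    (hχ : χ = g1 * r) (hab : a * g2 + b * r = 1) (hg : g2 = g3 * g1) :
    (b * r) * (b * r) = b * r - (a * b * g3) * χ ∧ g2 * (b * r) = (b * g3) * χ := by
  constructor
  · linear_combination (b * r) * hab + (a * b * g3) * hχ - (a * b * r) * hg
  · linear_combination (b * r) * hg - (b * g3) * hχ

lemma irr_natDegree_pos {f : K[X]} (hf : f.Monic) (hfi : Irreducible f) :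
    0 < f.natDegree := by
  rcases Nat.eq_zero_or_pos f.natDegree with h | h
  · exact absurd (hf.natDegree_eq_zero.mp h ▸ isUnit_one) hfi.not_isUnit
  · exact h

/-- The canonical polynomial idempotent projecting onto `ker g(X)^n`. -/
lemma exists_proj (hn : 0 < n) (X : Matrix (Fin n) (Fin n) K) {g : K[X]}
    (hg : g.Monic) (hgi : Irreducible g) :
    ∃ s : K[X], aeval X s * aeval X s = aeval X s ∧
      aeval X g ^ n * aeval X s = 0 ∧
      (∀ u : Fin n → K, aeval X g ^ n *ᵥ u = 0 → aeval X s *ᵥ u = u) ∧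
      ¬ g ∣ s := by
  classical
  have hχ0 : X.charpoly ≠ 0 := X.charpoly_monic.ne_zero
  have hfin : FiniteMultiplicity g X.charpoly :=
    FiniteMultiplicity.of_not_isUnit hgi.not_isUnit hχ0
  obtain ⟨r, hkr, hgr⟩ := hfin.exists_eq_pow_mul_and_not_dvd
  set k := multiplicity g X.charpoly with hkdef
  have hdegχ : X.charpoly.natDegree = n := by
    rw [Matrix.charpoly_natDegree_eq_dim, Fintype.card_fin]
  have hdk : k ≤ n := by
    have h1 : g ^ k ∣ X.charpoly := ⟨r, hkr⟩
    have h2 : (g ^ k).natDegree ≤ n := hdegχ ▸ Polynomial.natDegree_le_of_dvd h1 hχ0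
    have h3 : 0 < g.natDegree := irr_natDegree_pos hg hgi
    rw [Polynomial.natDegree_pow] at h2
    nlinarith
  have hcop : IsCoprime (g ^ n) r := (hgi.coprime_iff_not_dvd.mpr hgr).pow_left
  obtain ⟨a, b, hab⟩ := hcop
  have hgpow : g ^ n = g ^ (n - k) * g ^ k := by rw [← pow_add, Nat.sub_add_cancel hdk]
  obtain ⟨key1, key2⟩ := aux_ring (g ^ k) (g ^ n) (g ^ (n - k)) r a b X.charpoly hkr hab hgpow
  refine ⟨b * r, ?_, ?_, ?_, ?_⟩
  · have := congrArg (aeval X) key1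
    simpa [_root_.map_mul, map_sub, Matrix.aeval_self_charpoly] using this
  · have := congrArg (aeval X) key2
    simpa [_root_.map_mul, map_pow, Matrix.aeval_self_charpoly] using this
  · intro u hu
    have h1 : aeval X a * aeval X g ^ n + aeval X (b * r) = 1 := by
      have := congrArg (aeval X) hab
      simpa [map_add, _root_.map_mul, map_pow, _root_.map_one] using this
    have := congrArg (· *ᵥ u) h1
    simp only [Matrix.add_mulVec, Matrix.one_mulVec, ← Matrix.mulVec_mulVec, hu,
      Matrix.mulVec_zero, zero_add] at this
    exact this
  · intro hdvd
    have h1 : g ∣ a * g ^ n := Dvd.dvd.mul_left (dvd_pow_self g hn.ne') a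
    have h2 : g ∣ (1 : K[X]) := hab ▸ dvd_add h1 hdvd
    exact hgi.not_isUnit (isUnit_of_dvd_one h2)

/-- The mixing construction: a nonzero `X`-equivariant map supported on the range of `E`
with values in the cyclic module generated by the socle vector `b`. -/
lemma mix (X E : Matrix (Fin n) (Fin n) K) {f : K[X]} (hf : f.Monic) (hfi : Irreducible f)
    (hEX : E * X = X * E) (hE2 : E * E = E) (hEne : E ≠ 0)
    (hkill : aeval X f ^ n * E = 0)
    (b : Fin n → K) (hb0 : b ≠ 0) (hbf : aeval X f *ᵥ b = 0) :
    ∃ W : Matrix (Fin n) (Fin n) K, W ≠ 0 ∧ W * X = X * W ∧ W * E = W ∧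
      ∀ M : Matrix (Fin n) (Fin n) K, M *ᵥ b = 0 → M * X = X * M → M * W = 0 := by
  classical
  -- transposed data
  have hTX : Eᵀ * Xᵀ = Xᵀ * Eᵀ := by rw [← Matrix.transpose_mul, ← Matrix.transpose_mul, hEX]
  have hT2 : Eᵀ * Eᵀ = Eᵀ := by rw [← Matrix.transpose_mul, hE2]
  have hTne : Eᵀ ≠ 0 := by
    intro h
    apply hEne
    have := congrArg Matrix.transpose h
    simpa using this
  have hTkill : aeval Xᵀ f ^ n * Eᵀ = 0 := by
    have h1 : E * aeval X f ^ n = aeval X f ^ n * E := by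
      have := comm_aeval hEX (f ^ n)
      simpa [map_pow] using this
    rw [← aeval_transpose, ← Matrix.transpose_pow, ← Matrix.transpose_mul, h1, hkill]
    simp
  obtain ⟨b', hb'0, hb'fix, hb'f⟩ := exists_socle Xᵀ Eᵀ f hTX hT2 hTne hTkill
  set d := f.natDegree with hd
  have hd1 : 0 < d := irr_natDegree_pos hf hfi
  set C : Matrix (Fin n) (Fin n) K := vecMulVec b b' with hC
  have hfC : aeval X f * C = 0 := by
    rw [hC, mul_vecMulVec, hbf]
    ext i j; simp [Matrix.vecMulVec_apply]
  have hCf : C * aeval X f = 0 := by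
    rw [hC, vecMulVec_mul, aeval_transpose, hb'f]
    ext i j; simp [Matrix.vecMulVec_apply]
  have hCE : C * E = C := by rw [hC, vecMulVec_mul, hb'fix]
  have hEpow : ∀ j : ℕ, E * X ^ j = X ^ j * E := fun j => Commute.pow_right hEX j
  set T : ℕ → Matrix (Fin n) (Fin n) K :=
    fun k => ∑ i ∈ Finset.range k, X ^ i * C * X ^ (k - 1 - i) with hT
  set W : Matrix (Fin n) (Fin n) K := ∑ k ∈ Finset.range (d + 1), f.coeff k • T k with hW
  -- (1) equivariance
  have key : ∀ k : ℕ, X * T k - T k * X = X ^ k * C - C * X ^ k := by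
    intro k
    rw [hT]
    simp only []
    rw [Finset.mul_sum, Finset.sum_mul, ← Finset.sum_sub_distrib]
    have hterm : ∀ i ∈ Finset.range k,
        X * (X ^ i * C * X ^ (k - 1 - i)) - X ^ i * C * X ^ (k - 1 - i) * X
          = X ^ (i + 1) * C * X ^ (k - (i + 1)) - X ^ i * C * X ^ (k - i) := by
      intro i hi
      have hik : i < k := Finset.mem_range.mp hi
      have e1 : k - (i + 1) = k - 1 - i := by omega
      have e2 : k - i = (k - 1 - i) + 1 := by omega
      rw [e1, e2, pow_succ', pow_succ]
      noncomm_ring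
    rw [Finset.sum_congr rfl hterm, Finset.sum_range_sub (f := fun i => X ^ i * C * X ^ (k - i)) k]
    simp
  have hWX : W * X = X * W := by
    have h1 : X * W - W * X = 0 := by
      rw [hW, Finset.mul_sum, Finset.sum_mul, ← Finset.sum_sub_distrib]
      have hterm : ∀ k ∈ Finset.range (d + 1),
          X * (f.coeff k • T k) - (f.coeff k • T k) * X
            = (f.coeff k • X ^ k) * C - C * (f.coeff k • X ^ k) := by
        intro k _
        rw [mul_smul_comm, smul_mul_assoc, ← smul_sub, key k, smul_sub,
          smul_mul_assoc, mul_smul_comm]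
      rw [Finset.sum_congr rfl hterm, Finset.sum_sub_distrib, ← Finset.sum_mul, ← Finset.mul_sum,
        ← Polynomial.aeval_eq_sum_range, hfC, hCf, sub_zero]
    have := sub_eq_zero.mp h1
    exact this.symm
  -- (2) W * E = W
  have hWE : W * E = W := by
    rw [hW, Finset.sum_mul]
    apply Finset.sum_congr rfl
    intro k _
    rw [smul_mul_assoc]
    congr 1
    rw [hT]
    simp only []
    rw [Finset.sum_mul]
    apply Finset.sum_congr rfl
    intro i _
    calc X ^ i * C * X ^ (k - 1 - i) * E
        = X ^ i * C * (X ^ (k - 1 - i) * E) := by rw [mul_assoc]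
      _ = X ^ i * C * (E * X ^ (k - 1 - i)) := by rw [← hEpow]
      _ = X ^ i * (C * E) * X ^ (k - 1 - i) := by noncomm_ring
      _ = X ^ i * C * X ^ (k - 1 - i) := by rw [hCE]
  -- (3) annihilation
  have hM : ∀ M : Matrix (Fin n) (Fin n) K, M *ᵥ b = 0 → M * X = X * M → M * W = 0 := by
    intro M hMb hMX
    have hMpow : ∀ j : ℕ, M * X ^ j = X ^ j * M := fun j => Commute.pow_right hMX j
    have hMC : M * C = 0 := by
      rw [hC, mul_vecMulVec, hMb]
      ext i j; simp [Matrix.vecMulVec_apply]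
    rw [hW, Finset.mul_sum]
    apply Finset.sum_eq_zero
    intro k _
    rw [mul_smul_comm]
    convert smul_zero (f.coeff k)
    rw [hT]
    simp only []
    rw [Finset.mul_sum]
    apply Finset.sum_eq_zero
    intro i _
    calc M * (X ^ i * C * X ^ (k - 1 - i))
        = (M * X ^ i) * C * X ^ (k - 1 - i) := by noncomm_ring
      _ = X ^ i * (M * C) * X ^ (k - 1 - i) := by rw [hMpow]; noncomm_ring
      _ = 0 := by rw [hMC]; noncomm_ring
  -- (4) nonvanishing
  obtain ⟨i0, hi0⟩ := Function.ne_iff.mp hb'0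
  have hi0' : b' i0 ≠ 0 := by simpa using hi0
  set v : Fin n → K := Pi.single i0 1 with hv
  set c : ℕ → K := fun j => b' ⬝ᵥ (X ^ j *ᵥ v) with hc
  set pv : K[X] := ∑ k ∈ Finset.range (d + 1),
      f.coeff k • ∑ i ∈ Finset.range k, c (k - 1 - i) • (Polynomial.X : K[X]) ^ i with hpv
  have stepA : W *ᵥ v = aeval X pv *ᵥ b := by
    rw [hW, hpv, map_sum, sum_mulVec, sum_mulVec]
    apply Finset.sum_congr rfl
    intro k _
    rw [_root_.map_smul, Matrix.smul_mulVec, Matrix.smul_mulVec]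
    congr 1
    rw [hT, map_sum]
    simp only []
    rw [sum_mulVec, sum_mulVec]
    apply Finset.sum_congr rfl
    intro i _
    rw [_root_.map_smul, map_pow, aeval_X, Matrix.smul_mulVec,
      ← Matrix.mulVec_mulVec, ← Matrix.mulVec_mulVec, vecMulVec_mulVec,
      Matrix.mulVec_smul]
  have stepB : pv.coeff (d - 1) = b' i0 := by
    rw [hpv, Polynomial.finset_sum_coeff]
    have hterm : ∀ k ∈ Finset.range (d + 1),
        (f.coeff k • ∑ i ∈ Finset.range k, c (k - 1 - i) • (Polynomial.X : K[X]) ^ i).coeff (d - 1)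
          = f.coeff k * (if d - 1 ∈ Finset.range k then c (k - 1 - (d - 1)) else 0) := by
      intro k _
      rw [Polynomial.coeff_smul, Polynomial.finset_sum_coeff, smul_eq_mul]
      congr 1
      rw [← Finset.sum_ite_eq (Finset.range k) (d - 1) (fun i => c (k - 1 - i))]
      apply Finset.sum_congr rfl
      intro i _
      rw [Polynomial.coeff_smul, Polynomial.coeff_X_pow, smul_eq_mul]
      by_cases h : d - 1 = i
      · subst h; simp
      · rw [if_neg h, if_neg h, mul_zero]
    rw [Finset.sum_congr rfl hterm, Finset.sum_eq_single d]
    · rw [if_pos (Finset.mem_range.mpr (by omega))]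
      have : d - 1 - (d - 1) = 0 := by omega
      rw [this, hd, hf.coeff_natDegree, one_mul, hc]
      simp only [pow_zero, Matrix.one_mulVec, hv]
      rw [dotProduct_single, mul_one]
    · intro k hk hkd
      have : ¬ (d - 1 ∈ Finset.range k) := by
        rw [Finset.mem_range] at *
        omega
      rw [if_neg this, mul_zero]
    · intro h
      exact absurd (Finset.mem_range.mpr (by omega)) h
  have hpv0 : pv ≠ 0 := by
    intro h
    rw [h, Polynomial.coeff_zero] at stepB
    exact hi0' stepB.symm
  have hpvdeg : pv.natDegree < d := by
    have h1 : pv.natDegree ≤ d - 1 := by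
      rw [hpv]
      apply Polynomial.natDegree_sum_le_of_forall_le
      intro k hk
      apply le_trans (Polynomial.natDegree_smul_le _ _)
      apply Polynomial.natDegree_sum_le_of_forall_le
      intro i hi
      apply le_trans (Polynomial.natDegree_smul_le _ _)
      rw [Polynomial.natDegree_X_pow]
      have := Finset.mem_range.mp hi
      have := Finset.mem_range.mp hk
      omega
    omega
  have hfpv : ¬ f ∣ pv := by
    intro hdvd
    have := Polynomial.natDegree_le_of_dvd hdvd hpv0
    omega
  have stepD : aeval X pv *ᵥ b ≠ 0 := by
    intro h0
    obtain ⟨s, t, hst⟩ := hfi.coprime_iff_not_dvd.mpr hfpv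
    apply hb0
    calc b = aeval X (s * f + t * pv) *ᵥ b := by rw [hst, _root_.map_one, Matrix.one_mulVec]
      _ = aeval X s *ᵥ (aeval X f *ᵥ b) + aeval X t *ᵥ (aeval X pv *ᵥ b) := by
          rw [map_add, _root_.map_mul, _root_.map_mul, Matrix.add_mulVec,
            Matrix.mulVec_mulVec, Matrix.mulVec_mulVec]
      _ = 0 := by rw [hbf, h0, Matrix.mulVec_zero, Matrix.mulVec_zero, add_zero]
  refine ⟨W, ?_, hWX, hWE, hM⟩
  intro h
  apply stepD
  rw [← stepA, h, Matrix.zero_mulVec]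

lemma idem_sub {A : Type*} [Ring A] {p q : A} (hp : p * p = p) (hq : q * q = q)
    (hpq : p * q = q * p) :
    (p - p * q) * (p - p * q) = p - p * q ∧ (p * q) * (p * q) = p * q ∧
      q * (p - p * q) = 0 ∧ (p * q) * q = p * q := by
  have hE1 : (p * q) * (p * q) = p * q := by
    calc (p * q) * (p * q) = p * (q * p) * q := by noncomm_ring
      _ = p * (p * q) * q := by rw [← hpq]
      _ = (p * p) * (q * q) := by noncomm_ring
      _ = p * q := by rw [hp, hq]
  have hqpp : (p * q) * p = p * q := by
    calc (p * q) * p = p * (q * p) := by noncomm_ring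
      _ = p * (p * q) := by rw [← hpq]
      _ = (p * p) * q := by noncomm_ring
      _ = p * q := by rw [hp]
  have hppq : p * (p * q) = p * q := by
    calc p * (p * q) = (p * p) * q := by noncomm_ring
      _ = p * q := by rw [hp]
  refine ⟨?_, hE1, ?_, ?_⟩
  · calc (p - p * q) * (p - p * q)
        = p * p - p * (p * q) - ((p * q) * p - (p * q) * (p * q)) := by noncomm_ring
      _ = p - p * q - (p * q - p * q) := by rw [hp, hppq, hqpp, hE1]
      _ = p - p * q := by abel
  · calc q * (p - p * q) = q * p - (q * p) * q := by noncomm_ring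
      _ = q * p - (p * q) * q := by rw [hpq]
      _ = q * p - p * (q * q) := by noncomm_ring
      _ = q * p - p * q := by rw [hq]
      _ = 0 := by rw [hpq, sub_self]
  · calc (p * q) * q = p * (q * q) := by noncomm_ring
      _ = p * q := by rw [hq]

/-- Main step: each nonzero primary component of `X` is contained in a primary
component of `Y`. -/
lemma key (hn : 0 < n) (X Y : Matrix (Fin n) (Fin n) K)
    (hc : {W : Matrix (Fin n) (Fin n) K | W * X = X * W} =
          {W : Matrix (Fin n) (Fin n) K | W * Y = Y * W})
    {f : K[X]} (hf : f.Monic) (hfi : Irreducible f)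
    (hV : LinearMap.ker (Matrix.mulVecLin (aeval X f ^ n)) ≠ ⊥) :
    ∃ g : K[X], g.Monic ∧ Irreducible g ∧
      LinearMap.ker (Matrix.mulVecLin (aeval X f ^ n)) ≤
        LinearMap.ker (Matrix.mulVecLin (aeval Y g ^ n)) ∧
      LinearMap.ker (Matrix.mulVecLin (aeval Y g ^ n)) ≠ ⊥ := by
  classical
  obtain ⟨v, hvmem, hv0⟩ := (Submodule.ne_bot_iff _).mp hV
  have hvker : aeval X f ^ n *ᵥ v = 0 := by
    simpa [Matrix.mulVecLin_apply] using LinearMap.mem_ker.mp hvmem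
  let J : Ideal K[X] := {
    carrier := {r | aeval Y r *ᵥ v = 0}
    add_mem' := fun {r1 r2} h1 h2 => by
      simp only [Set.mem_setOf_eq] at *
      rw [map_add, Matrix.add_mulVec, h1, h2, add_zero]
    zero_mem' := by simp [Set.mem_setOf_eq]
    smul_mem' := fun c r hr => by
      simp only [Set.mem_setOf_eq, smul_eq_mul] at *
      rw [_root_.map_mul, ← Matrix.mulVec_mulVec, hr, Matrix.mulVec_zero] }
  haveI : J.IsPrincipal := IsPrincipalIdealRing.principal J
  set m := Submodule.IsPrincipal.generator J with hm
  have hmdvd : ∀ r : K[X], aeval Y r *ᵥ v = 0 → m ∣ r := fun r hr =>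
    (Submodule.IsPrincipal.mem_iff_generator_dvd J).mp hr
  have hmnu : ¬ IsUnit m := by
    intro hu
    have h1 : (1 : K[X]) ∈ J := (Submodule.IsPrincipal.mem_iff_generator_dvd J).mpr hu.dvd
    have h2 : aeval Y (1 : K[X]) *ᵥ v = 0 := h1
    rw [_root_.map_one, Matrix.one_mulVec] at h2
    exact hv0 h2
  obtain ⟨g, hg, hgi, hgm⟩ := Polynomial.exists_monic_irreducible_factor m hmnu
  obtain ⟨sp, hp2, hpkill, hpfix, -⟩ := exists_proj hn X hf hfi
  obtain ⟨sq, hq2, hqkill, hqfix, hgsq⟩ := exists_proj hn Y hg hgi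
  set p := aeval X sp with hpdef
  set q := aeval Y sq with hqdef
  have hpX : p * X = X * p := (comm_aeval rfl sp).symm
  have hqY : q * Y = Y * q := (comm_aeval rfl sq).symm
  have hqX : q * X = X * q := by
    have h1 : q ∈ {W : Matrix (Fin n) (Fin n) K | W * Y = Y * W} := hqY
    rw [← hc] at h1
    exact h1
  have hpq : p * q = q * p := (comm_aeval hqX sp).symm
  have hqv : q *ᵥ v ≠ 0 := by
    intro h0
    exact hgsq (hgm.trans (hmdvd sq h0))
  have hpv : p *ᵥ v = v := hpfix v hvker
  obtain ⟨hE2idem, hE1idem, hqE2, hE1q⟩ := idem_sub hp2 hq2 hpq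
  have hE2zero : p - p * q = 0 := by
    by_contra hE2ne
    have hE2X : (p - p * q) * X = X * (p - p * q) := by
      rw [sub_mul, mul_sub, hpX, mul_assoc, hqX, ← mul_assoc, hpX, mul_assoc]
    have hE1X : (p * q) * X = X * (p * q) := by
      rw [mul_assoc, hqX, ← mul_assoc, hpX, mul_assoc]
    have hkE2 : aeval X f ^ n * (p - p * q) = 0 := by
      rw [mul_sub, ← mul_assoc, hpkill, zero_mul]
      simp
    obtain ⟨b, hb0, hbfix, hbf⟩ := exists_socle X (p - p * q) f hE2X hE2idem hE2ne hkE2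
    have hE1ne : p * q ≠ 0 := by
      intro h1
      apply hqv
      rw [← hpv, Matrix.mulVec_mulVec, ← hpq, h1, Matrix.zero_mulVec]
    have hkE1 : aeval X f ^ n * (p * q) = 0 := by rw [← mul_assoc, hpkill, zero_mul]
    obtain ⟨W, hW0, hWX, hWE1, hWM⟩ := mix X (p * q) hf hfi hE1X hE1idem hE1ne hkE1 b hb0 hbf
    have hqb : q *ᵥ b = 0 := by
      rw [← hbfix, Matrix.mulVec_mulVec, hqE2, Matrix.zero_mulVec]
    have hqW : q * W = 0 := hWM q hqb hqX
    have hWY : W * Y = Y * W := by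
      have h1 : W ∈ {W : Matrix (Fin n) (Fin n) K | W * X = X * W} := hWX
      rw [hc] at h1
      exact h1
    have hWq : W * q = q * W := comm_aeval hWY sq
    have hW : W = 0 := by
      have h2 : W * q = W := by
        calc W * q = (W * (p * q)) * q := by rw [hWE1]
          _ = W * ((p * q) * q) := by rw [mul_assoc]
          _ = W * (p * q) := by rw [hE1q]
          _ = W := hWE1
      rw [← h2, hWq, hqW]
    exact hW0 hW
  have hppq : p = p * q := by rwa [sub_eq_zero] at hE2zero
  refine ⟨g, hg, hgi, ?_, ?_⟩
  · intro u hu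
    have huk : aeval X f ^ n *ᵥ u = 0 := by
      simpa [Matrix.mulVecLin_apply] using LinearMap.mem_ker.mp hu
    have hpu : p *ᵥ u = u := hpfix u huk
    have h1 : u = q *ᵥ u := by
      calc u = p *ᵥ u := hpu.symm
        _ = (p * q) *ᵥ u := by rw [← hppq]
        _ = q *ᵥ (p *ᵥ u) := by rw [hpq, ← Matrix.mulVec_mulVec]
        _ = q *ᵥ u := by rw [hpu]
    rw [LinearMap.mem_ker, Matrix.mulVecLin_apply]
    conv_lhs => rw [h1]
    rw [Matrix.mulVec_mulVec, hqkill, Matrix.zero_mulVec]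
  · rw [Submodule.ne_bot_iff]
    refine ⟨q *ᵥ v, ?_, hqv⟩
    rw [LinearMap.mem_ker, Matrix.mulVecLin_apply, Matrix.mulVec_mulVec, hqkill,
      Matrix.zero_mulVec]

end PrimaryCompAux

/-- If `X` and `Y` have equal centralizers, then the nonzero subspaces `ker (f(X)^n)`,
for `f` monic irreducible, coincide with the nonzero subspaces `ker (g(Y)^n)`, for `g`
monic irreducible: the primary decompositions of `K^n` under `X` and `Y` have the same
summands. -/
theorem primary_components_eq_of_cent_eq
    (K : Type*) [Field K] (n : ℕ) (X Y : Matrix (Fin n) (Fin n) K)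
    (hc : {W : Matrix (Fin n) (Fin n) K | W * X = X * W} =
          {W : Matrix (Fin n) (Fin n) K | W * Y = Y * W}) :
    {V : Submodule K (Fin n → K) | V ≠ ⊥ ∧ ∃ f : Polynomial K, f.Monic ∧ Irreducible f ∧
        V = LinearMap.ker ((Polynomial.aeval X f ^ n).mulVecLin)} =
    {V : Submodule K (Fin n → K) | V ≠ ⊥ ∧ ∃ g : Polynomial K, g.Monic ∧ Irreducible g ∧
        V = LinearMap.ker ((Polynomial.aeval Y g ^ n).mulVecLin)} := by
  rcases Nat.eq_zero_or_pos n with hn | hn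
  · subst hn
    ext V
    simp only [Set.mem_setOf_eq]
    constructor
    · rintro ⟨hV, -⟩
      exact absurd (Subsingleton.elim V ⊥) hV
    · rintro ⟨hV, -⟩
      exact absurd (Subsingleton.elim V ⊥) hV
  · have disj : ∀ (Z : Matrix (Fin n) (Fin n) K) (f f' : Polynomial K), f.Monic → Irreducible f →
        f'.Monic → Irreducible f' → f ≠ f' → ∀ w : Fin n → K,
        Polynomial.aeval Z f ^ n *ᵥ w = 0 → Polynomial.aeval Z f' ^ n *ᵥ w = 0 → w = 0 := by
      intro Z f f' hf hfi hf' hfi' hne w h1 h2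
      have hnd : ¬ f ∣ f' := fun hdvd =>
        hne (Polynomial.eq_of_monic_of_associated hf hf' (hfi.associated_of_dvd hfi' hdvd))
      have hcop : IsCoprime (f ^ n) (f' ^ n) := (hfi.coprime_iff_not_dvd.mpr hnd).pow
      obtain ⟨s, t, hst⟩ := hcop
      calc w = Polynomial.aeval Z (s * f ^ n + t * f' ^ n) *ᵥ w := by
            rw [hst, _root_.map_one, Matrix.one_mulVec]
        _ = Polynomial.aeval Z s *ᵥ (Polynomial.aeval Z (f ^ n) *ᵥ w)
              + Polynomial.aeval Z t *ᵥ (Polynomial.aeval Z (f' ^ n) *ᵥ w) := by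
            rw [map_add, _root_.map_mul, _root_.map_mul, Matrix.add_mulVec,
              Matrix.mulVec_mulVec, Matrix.mulVec_mulVec]
        _ = 0 := by
            rw [map_pow, map_pow, h1, h2, Matrix.mulVec_zero, Matrix.mulVec_zero, add_zero]
    have side : ∀ (X Y : Matrix (Fin n) (Fin n) K),
        ({W | W * X = X * W} = {W | W * Y = Y * W}) →
        ∀ V : Submodule K (Fin n → K),
        (V ≠ ⊥ ∧ ∃ f : Polynomial K, f.Monic ∧ Irreducible f ∧
          V = LinearMap.ker ((Polynomial.aeval X f ^ n).mulVecLin)) →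
        (V ≠ ⊥ ∧ ∃ g : Polynomial K, g.Monic ∧ Irreducible g ∧
          V = LinearMap.ker ((Polynomial.aeval Y g ^ n).mulVecLin)) := by
      intro X Y hc V hV
      obtain ⟨hVne, f, hf, hfi, rfl⟩ := hV
      obtain ⟨g, hg, hgi, hsub, hgne⟩ := PrimaryCompAux.key hn X Y hc hf hfi hVne
      obtain ⟨f', hf', hfi', hsub', -⟩ := PrimaryCompAux.key hn Y X hc.symm hg hgi hgne
      have hff' : f = f' := by
        by_contra hne
        obtain ⟨w, hwmem, hw0⟩ := (Submodule.ne_bot_iff _).mp hVne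
        have h1 : Polynomial.aeval X f ^ n *ᵥ w = 0 := by
          simpa [Matrix.mulVecLin_apply] using LinearMap.mem_ker.mp hwmem
        have h2 : Polynomial.aeval X f' ^ n *ᵥ w = 0 := by
          simpa [Matrix.mulVecLin_apply] using LinearMap.mem_ker.mp (hsub' (hsub hwmem))
        exact hw0 (disj X f f' hf hfi hf' hfi' hne w h1 h2)
      subst hff'
      exact ⟨hVne, g, hg, hgi, le_antisymm hsub hsub'⟩
    ext V
    simp only [Set.mem_setOf_eq]
    exact ⟨side X Y hc V, side Y X hc.symm V⟩
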